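/- Let r ∈ (0, π/2) and α, β ∈ [0, π/2). Define g(ℓ) = 2·tan(r)·ℓ − ((1 − cos(ℓ))/2)·(1/cos(α) + 1/cos(β)) − tan(r)·(ℓ − sin(ℓ)) for ℓ ∈ [0, π], and g(ℓ) = g(π) for ℓ > π. Then g attains its maximum on [0, ∞) exactly at ℓ* = 2·arctan(2·tan(r)/(1/cos(α) + 1/cos(β))); that is, g(ℓ) < g(ℓ*) for every ℓ ≥ 0 with ℓ ≠ ℓ*. -/

import Mathlib

open Real

/-- The dual test function for the `κ = +1`, `n = 2` isoperimetric problem: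
`g(ℓ) = 2·tan r·ℓ − ((1 − cos ℓ)/2)·(1/cos α + 1/cos β) − tan r·(ℓ − sin ℓ)` for
`ℓ ∈ [0, π]`, constant equal to `g(π)` afterwards. -/
noncomputable def sphG2 (r α β ℓ : ℝ) : ℝ :=
  if ℓ ≤ π then
    2 * tan r * ℓ - ((1 - cos ℓ) / 2) * (1 / cos α + 1 / cos β) - tan r * (ℓ - sin ℓ)
  else
    2 * tan r * π - ((1 - cos π) / 2) * (1 / cos α + 1 / cos β) - tan r * (π - sin π)

/-- `g` attains its maximum on `[0, ∞)` exactly at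
`ℓ* = 2·arctan (2·tan r / (1/cos α + 1/cos β))`. -/
theorem sphG2_lt_of_ne (r α β : ℝ) (hr : r ∈ Set.Ioo 0 (π / 2))
    (hα : α ∈ Set.Ico 0 (π / 2)) (hβ : β ∈ Set.Ico 0 (π / 2)) :
    ∀ ℓ : ℝ, 0 ≤ ℓ → ℓ ≠ 2 * arctan (2 * tan r / (1 / cos α + 1 / cos β)) →
      sphG2 r α β ℓ < sphG2 r α β (2 * arctan (2 * tan r / (1 / cos α + 1 / cos β))) := by
  obtain ⟨hr0, hr1⟩ := hr
  obtain ⟨hα0, hα1⟩ := hα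
  obtain ⟨hβ0, hβ1⟩ := hβ
  have ht : 0 < tan r := tan_pos_of_pos_of_lt_pi_div_two hr0 hr1
  have hcα : 0 < cos α := cos_pos_of_mem_Ioo ⟨by linarith [pi_div_two_pos], hα1⟩
  have hcβ : 0 < cos β := cos_pos_of_mem_Ioo ⟨by linarith [pi_div_two_pos], hβ1⟩
  set t := tan r with ht_def
  set S := 1 / cos α + 1 / cos β with hS_def
  have hS : 0 < S := by positivity
  have harg : 0 < 2 * t / S := by positivity
  set L := 2 * arctan (2 * t / S) with hL_def
  have hL0 : 0 < L := by
    have : arctan 0 < arctan (2 * t / S) := arctan_strictMono harg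
    rw [arctan_zero] at this
    simp only [hL_def]; linarith
  have hLπ : L < π := by
    have := arctan_lt_pi_div_two (2 * t / S)
    simp only [hL_def]; linarith
  have htanL : tan (L / 2) = 2 * t / S := by
    rw [hL_def]; rw [show 2 * arctan (2 * t / S) / 2 = arctan (2 * t / S) by ring]
    exact tan_arctan _
  set f : ℝ → ℝ := fun ℓ => t * ℓ + t * sin ℓ - S / 2 * (1 - cos ℓ) with hf_def
  have hderiv : ∀ x : ℝ, HasDerivAt f (t + t * cos x - S / 2 * sin x) x := by
    intro x
    have h1 : HasDerivAt (fun y : ℝ => t * y) t x := by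
      simpa using (hasDerivAt_id x).const_mul t
    have h2 : HasDerivAt (fun y : ℝ => t * sin y) (t * cos x) x :=
      (hasDerivAt_sin x).const_mul t
    have h3 : HasDerivAt (fun y : ℝ => S / 2 * (1 - cos y)) (S / 2 * sin x) x := by
      have := ((hasDerivAt_cos x).const_sub 1).const_mul (S / 2)
      simpa using this
    exact (h1.add h2).sub h3
  have hdiff : Differentiable ℝ f := fun x => (hderiv x).differentiableAt
  have hcont : Continuous f := hdiff.continuous
  -- sign of derivative on (0, π)
  have hsign : ∀ x ∈ Set.Ioo (0 : ℝ) π,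
      deriv f x = S * cos (x / 2) ^ 2 * (tan (L / 2) - tan (x / 2)) := by
    intro x hx
    rw [(hderiv x).deriv, htanL]
    have hc : 0 < cos (x / 2) :=
      cos_pos_of_mem_Ioo ⟨by linarith [hx.1, pi_pos], by linarith [hx.2]⟩
    have hcosx : cos x = 2 * cos (x / 2) ^ 2 - 1 := by
      have := cos_sq (x / 2)
      rw [show 2 * (x / 2) = x by ring] at this
      linarith
    have hsinx : sin x = 2 * sin (x / 2) * cos (x / 2) := by
      have := sin_two_mul (x / 2)
      rw [show 2 * (x / 2) = x by ring] at this
      linarith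
    rw [hcosx, hsinx, tan_eq_sin_div_cos]
    field_simp
    ring
  have hmono : StrictMonoOn f (Set.Icc 0 L) := by
    apply strictMonoOn_of_deriv_pos (convex_Icc 0 L) hcont.continuousOn
    intro x hx
    rw [interior_Icc] at hx
    rw [hsign x ⟨hx.1, hx.2.trans hLπ⟩]
    have hc : 0 < cos (x / 2) :=
      cos_pos_of_mem_Ioo ⟨by linarith [hx.1, pi_pos], by linarith [hx.2, hLπ]⟩
    have htlt : tan (x / 2) < tan (L / 2) := by
      apply tan_lt_tan_of_lt_of_lt_pi_div_two (by linarith [hx.1, pi_pos])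
        (by linarith [hLπ]) (by linarith [hx.2])
    have : 0 < tan (L / 2) - tan (x / 2) := by linarith
    positivity
  have hanti : StrictAntiOn f (Set.Icc L π) := by
    apply strictAntiOn_of_deriv_neg (convex_Icc L π) hcont.continuousOn
    intro x hx
    rw [interior_Icc] at hx
    rw [hsign x ⟨hL0.trans hx.1, hx.2⟩]
    have hc : 0 < cos (x / 2) :=
      cos_pos_of_mem_Ioo ⟨by linarith [hx.1, hL0], by linarith [hx.2]⟩
    have htlt : tan (L / 2) < tan (x / 2) := by
      apply tan_lt_tan_of_lt_of_lt_pi_div_two (by linarith [hL0])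
        (by linarith [hx.2]) (by linarith [hx.1])
    exact mul_neg_of_pos_of_neg (by positivity) (by linarith)
  -- sphG2 on [0, π] equals f
  have hval : ∀ x : ℝ, x ≤ π → sphG2 r α β x = f x := by
    intro x hx
    rw [sphG2, if_pos hx, hf_def]
    ring
  intro ℓ hℓ0 hne
  rw [hval L hLπ.le]
  rcases le_or_gt ℓ π with hℓπ | hℓπ
  · rw [hval ℓ hℓπ]
    rcases lt_or_gt_of_ne hne with h | h
    · exact hmono ⟨hℓ0, h.le⟩ ⟨hL0.le, le_refl L⟩ h
    · exact hanti ⟨le_refl L, hLπ.le⟩ ⟨h.le, hℓπ⟩ h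
  · have : sphG2 r α β ℓ = f π := by
      rw [sphG2, if_neg (not_le.mpr hℓπ), hf_def]; ring
    rw [this]
    exact hanti ⟨le_refl L, hLπ.le⟩ ⟨hLπ.le, le_refl π⟩ hLπ
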